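/- Let d ≥ 3, b ≥ 1 be integers, p a prime with p ≡ 1 mod d, and for k ≥ 0 write p^k − 1 = d·m_k. With x(T), y(T) ∈ ℤ[[T]][T^{-1}] the formal parametrization of y^d = x^a(x−1)^b at infinity (x(T) = T^d u(T), y(T) = T x(T), u ∈ 1+Tℤ[[T]] with u^{b−1} = (u − T^{−d})^b), one has the identity T^{p^k} = ∑_{i = m_k − b m_k}^{m_k} γ_i^{(k)} x(T)^i T, where γ_i^{(k)} = (−1)^{i − m_k} \binom{m_k b}{m_k − i}. In particular the coefficient of x(T)^0·T is γ_0^{(k)} = \binom{m_k b}{m_k} = \binom{((p^k−1)/d)·b}{(p^k−1)/d}. -/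

import Mathlib

/- We work in the field `LaurentSeries ℚ = ℚ((t))`, where `t` is the local
parameter at infinity (`t = 1/T`, so the paper's `T^m` is `single (-m) 1`).
The formal parametrization of `y^d = x^a (x−1)^b` at infinity is
`x = T^d u`, `y = T x` with `u ∈ 1 + t·ℚ[[t]]` satisfying
`u^{b−1} = (u − t^d)^b` (statement 17); here `x` is a unit of `ℚ((t))`, so
integer powers `x^i` make sense. -/

open HahnSeries

/-- Let `d ≥ 3` (odd, as for the curve of statement 17),
`b ≥ 1`, `p` a prime with `p ≡ 1 mod d`, and write `p^k − 1 = d·m`.  Then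
`T^{p^k} = ∑_{i=m−bm}^{m} γ_i x(T)^i·T` with
`γ_i = (−1)^{i−m} binom(m·b, m−i)`; in particular the coefficient of
`x(T)^0·T` is `γ_0 = binom(m·b, m) = binom(((p^k−1)/d)·b, (p^k−1)/d)`. -/
theorem t_pow_pk_expansion
    (d a b p k m : ℕ) (hd3 : 3 ≤ d) (hdodd : Odd d) (hb : 0 < b) (ha : 0 < a)
    (hab : a + b = d + 1) (hp : p.Prime) (hpd : p % d = 1)
    (hm : p ^ k - 1 = d * m)
    (u : PowerSeries ℚ)
    (hu0 : PowerSeries.constantCoeff u = 1)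
    (hu : (HahnSeries.ofPowerSeries ℤ ℚ u : LaurentSeries ℚ) ^ (b - 1) =
      ((HahnSeries.ofPowerSeries ℤ ℚ u : LaurentSeries ℚ) -
          HahnSeries.single (d : ℤ) 1) ^ b)
    (x : LaurentSeries ℚ)
    (hx : x = HahnSeries.single (-(d : ℤ)) 1 * HahnSeries.ofPowerSeries ℤ ℚ u)
    (γ : ℤ → ℚ)
    (hγ : ∀ i : ℤ, γ i = (-1 : ℚ) ^ ((m : ℤ) - i).toNat *
      ((m * b).choose ((m : ℤ) - i).toNat : ℚ)) :
    (HahnSeries.single (-(p ^ k : ℤ)) 1 : LaurentSeries ℚ) =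
        ∑ i ∈ Finset.Icc ((m : ℤ) - b * m) (m : ℤ),
          γ i • (x ^ i * HahnSeries.single (-1 : ℤ) 1) ∧
      γ 0 = ((m * b).choose m : ℚ) ∧
      γ 0 = (((p ^ k - 1) / d * b).choose ((p ^ k - 1) / d) : ℚ) := by
  -- basic numerics
  have hd0 : 0 < d := by omega
  have hpk1 : 1 ≤ p ^ k := Nat.one_le_pow _ _ hp.pos
  have hpk : p ^ k = d * m + 1 := by omega
  have hp2 : p ≠ 2 := by
    rintro rfl
    have : 2 % d = 2 := Nat.mod_eq_of_lt (by omega)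
    omega
  have hpodd : Odd p := hp.odd_of_ne_two hp2
  have hmeven : Even m := by
    have h1 : Odd (p ^ k) := hpodd.pow
    have h2 : Even (p ^ k - 1) := Nat.Odd.sub_odd h1 odd_one
    rw [hm, Nat.even_mul] at h2
    rcases h2 with h | h
    · exact absurd h (Nat.not_even_iff_odd.mpr hdodd)
    · exact h
  have hγ0 : γ 0 = ((m * b).choose m : ℚ) := by
    rw [hγ 0]
    simp [hmeven.neg_one_pow]
  refine ⟨?_, hγ0, ?_⟩
  swap
  · rw [hγ0, hm, Nat.mul_div_cancel_left _ hd0]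
  -- main identity
  set U : LaurentSeries ℚ := HahnSeries.ofPowerSeries ℤ ℚ u with hU
  set t : LaurentSeries ℚ := HahnSeries.single (-1 : ℤ) 1 with ht
  have hUne : U ≠ 0 := by
    intro h
    apply one_ne_zero (α := ℚ)
    rw [← hu0]
    have hz : HahnSeries.ofPowerSeries ℤ ℚ u = HahnSeries.ofPowerSeries ℤ ℚ 0 := by
      rw [map_zero]; exact h
    have : u = 0 := HahnSeries.ofPowerSeries_injective hz
    simp [this]
  have hxne : x ≠ 0 := by
    rw [hx]
    refine mul_ne_zero ?_ hUne
    simp [HahnSeries.single_ne_zero]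
  have hbm : m ≤ b * m := Nat.le_mul_of_pos_left m hb
  -- Step 1: reindex the sum
  have step1 : ∑ i ∈ Finset.Icc ((m : ℤ) - b * m) (m : ℤ), γ i • (x ^ i * t)
      = ∑ j ∈ Finset.range (b * m + 1),
          (HahnSeries.single (0 : ℤ) ((-1 : ℚ) ^ j * ((m * b).choose j : ℚ))) *
            (x ^ ((m : ℤ) - j) * t) := by
    refine Finset.sum_nbij' (fun i => ((m : ℤ) - i).toNat) (fun j => (m : ℤ) - j)
      ?_ ?_ ?_ ?_ ?_
    · intro i hi
      simp only [Finset.mem_Icc] at hi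
      simp only [Finset.mem_range]
      omega
    · intro j hj
      simp only [Finset.mem_range] at hj
      simp only [Finset.mem_Icc]
      omega
    · intro i hi
      simp only [Finset.mem_Icc] at hi
      omega
    · intro j hj
      simp only [Finset.mem_range] at hj
      omega
    · intro i hi
      simp only [Finset.mem_Icc] at hi
      rw [HahnSeries.single_zero_mul_eq_smul, hγ i]
      have h1 : (m : ℤ) - (((m : ℤ) - i).toNat : ℤ) = i := by omega
      rw [h1]
  -- Step 2: binomial sum
  have step2 : (x - 1) ^ (b * m) = ∑ j ∈ Finset.range (b * m + 1),
      (HahnSeries.single (0 : ℤ) ((-1 : ℚ) ^ j * ((m * b).choose j : ℚ))) *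
        x ^ (b * m - j) := by
    rw [sub_pow, ← Finset.sum_range_reflect
      (fun i => (-1 : LaurentSeries ℚ) ^ (i + b * m) * x ^ i * 1 ^ (b * m - i) *
        ((b * m).choose i : LaurentSeries ℚ)) (b * m + 1)]
    refine Finset.sum_congr rfl fun j hj => ?_
    simp only [Finset.mem_range] at hj
    have hjle : j ≤ b * m := by omega
    have h1 : b * m + 1 - 1 - j = b * m - j := by omega
    rw [h1]
    have h2 : (b * m).choose (b * m - j) = (b * m).choose j := Nat.choose_symm hjle
    have h3 : b * m - j + b * m = j + 2 * (b * m - j) := by omega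
    rw [h2, h3, _root_.pow_add, pow_mul]
    simp only [← HahnSeries.C_apply, map_mul, map_pow, map_neg, map_one, map_natCast]
    rw [mul_comm m b]
    norm_num
    ring
  -- Step 3: key multiplicative identity
  have hsingle_pow : ∀ (c : ℤ) (n : ℕ),
      (HahnSeries.single c (1 : ℚ) : LaurentSeries ℚ) ^ n = HahnSeries.single (n * c) 1 := by
    intro c n
    rw [HahnSeries.single_pow, one_pow, nsmul_eq_mul]
  have hx1 : x - 1 = HahnSeries.single (-(d : ℤ)) 1 * (U - HahnSeries.single (d : ℤ) 1) := by
    rw [hx, mul_sub, HahnSeries.single_mul_single]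
    norm_num [HahnSeries.single_zero_one]
  have hUkey : (U - HahnSeries.single (d : ℤ) 1) ^ (b * m) = U ^ ((b - 1) * m) := by
    rw [pow_mul, ← hu, ← pow_mul]
  have hbm' : m + (b - 1) * m = b * m := by
    obtain ⟨b', rfl⟩ := Nat.exists_eq_add_of_le hb
    have h : 1 + b' - 1 = b' := by omega
    rw [h, Nat.add_mul, Nat.one_mul]
  have key : x ^ m * (x - 1) ^ (b * m) * t
      = HahnSeries.single (-(p ^ k : ℤ)) 1 * x ^ (b * m) := by
    rw [hx1, hx]
    simp only [mul_pow, hsingle_pow, hUkey, ht]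
    have e1 : U ^ m * U ^ ((b - 1) * m) = U ^ (b * m) := by rw [← _root_.pow_add, hbm']
    calc HahnSeries.single ((m : ℤ) * -(d : ℤ)) (1 : ℚ) * U ^ m *
          (HahnSeries.single (((b * m : ℕ) : ℤ) * -(d : ℤ)) 1 * U ^ ((b - 1) * m)) *
          HahnSeries.single (-1 : ℤ) 1
        = (HahnSeries.single ((m : ℤ) * -(d : ℤ)) (1 : ℚ) *
            HahnSeries.single (((b * m : ℕ) : ℤ) * -(d : ℤ)) 1 *
            HahnSeries.single (-1 : ℤ) 1) * (U ^ m * U ^ ((b - 1) * m)) := by ring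
      _ = (HahnSeries.single (-(p ^ k : ℤ)) (1 : ℚ) *
            HahnSeries.single (((b * m : ℕ) : ℤ) * -(d : ℤ)) 1) * U ^ (b * m) := by
          rw [e1, HahnSeries.single_mul_single, HahnSeries.single_mul_single,
            HahnSeries.single_mul_single]
          simp only [mul_one, one_mul]
          have hpk' : ((p : ℤ)) ^ k = (d : ℤ) * m + 1 := by exact_mod_cast hpk
          congr 2
          push_cast
          rw [hpk']
          ring
      _ = HahnSeries.single (-(p ^ k : ℤ)) 1 *
            (HahnSeries.single (((b * m : ℕ) : ℤ) * -(d : ℤ)) 1 * U ^ (b * m)) := by ring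
  -- assemble
  rw [step1]
  have hterm : ∀ j ∈ Finset.range (b * m + 1),
      (HahnSeries.single (0 : ℤ) ((-1 : ℚ) ^ j * ((m * b).choose j : ℚ))) *
        (x ^ ((m : ℤ) - j) * t)
      = x ^ ((m : ℤ) - (b * m : ℕ)) *
        (((HahnSeries.single (0 : ℤ) ((-1 : ℚ) ^ j * ((m * b).choose j : ℚ))) *
          x ^ (b * m - j)) * t) := by
    intro j hj
    simp only [Finset.mem_range] at hj
    have hexp : x ^ ((m : ℤ) - j) = x ^ ((m : ℤ) - (b * m : ℕ)) * x ^ (b * m - j : ℕ) := by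
      rw [← zpow_natCast x (b * m - j), ← zpow_add₀ hxne]
      congr 1
      omega
    rw [hexp]
    ring
  rw [Finset.sum_congr rfl hterm, ← Finset.mul_sum, ← Finset.sum_mul, ← step2]
  have hzs : x ^ ((m : ℤ) - (b * m : ℕ)) = x ^ m / x ^ (b * m) := by
    rw [← zpow_natCast x m, ← zpow_natCast x (b * m), ← zpow_sub₀ hxne]
  rw [hzs]
  rw [div_mul_eq_mul_div, ← mul_assoc, key]
  rw [mul_div_assoc, div_self (pow_ne_zero _ hxne), mul_one]
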